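/- Fix finite types X and Z, a finite additive abelian group Y, positive integers N and T, and unitary operators V₀, V₁, …, V_T on the Hilbert space H_std := ℂ^{(Fin N × X) × Y × Z}. For a tuple of functions O = (O₀, …, O_{N−1}) with each O_i : X → Y, let V_O be the unitary on H_std permuting basis vectors by e_{((i,x), y, z)} ↦ e_{((i,x), y + O_i(x), z)}, and let ψ_O := V_T V_O V_{T−1} ⋯ V_1 V_O V₀ e₀ for a fixed initial basis vector e₀ of H_std. Let H_syn := ℂ^{X × Y^N × ((Fin N) × Y × Z)}, for the same tuple O let U_O be the unitary on H_syn permuting basis vectors by e_{(x, (y₀,…,y_{N−1}), w)} ↦ e_{(x, (y₀ + O₀(x), …, y_{N−1} + O_{N−1}(x)), w)}, and let ι : H_std → H_syn be the linear isometry sending the basis vector e_{((i,x), y, z)} to the basis vector e_{(x, (0,…,0), (i, y, z))}. Then there exist unitary operators W₀, W₁, …, W_{2T} on H_syn, independent of O, such that for every tuple O of functions O_i : X → Y, W_{2T} U_O W_{2T−1} U_O ⋯ W_1 U_O W₀ e₀' = ι(ψ_O), where e₀' := ι(e₀). Consequently, any quantum query algorithm making T queries in the standard query model to N oracles can be simulated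 exactly, with identical output distribution, by a quantum query algorithm making 2T queries in the synchronized query model. -/

import Mathlib

open scoped BigOperators

noncomputable section

/-- The standard basis vector `e_b` of `ℂ^B`. -/
def basisVec {B : Type*} [DecidableEq B] (b : B) : B → ℂ :=
  fun b' => if b' = b then 1 else 0

/-- `runAlg U M T v = U_T M U_{T−1} M ⋯ U_1 M U_0 v`: the state after interleaving
`T` applications of the oracle matrix `M` with the unitaries `U_0, …, U_T`. -/
def runAlg {B : Type*} [Fintype B] (U : ℕ → Matrix B B ℂ) (M : Matrix B B ℂ) :
    ℕ → (B → ℂ) → (B → ℂ)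
  | 0, v => (U 0).mulVec v
  | t + 1, v => (U (t + 1)).mulVec (M.mulVec (runAlg U M t v))

/-- The standard-model oracle unitary `V_O` on `ℂ^{(Fin N × X) × Y × Z}`, permuting
basis vectors by `e_((i,x), y, z) ↦ e_((i,x), y + O_i(x), z)`. -/
def stdOracleMatrix {X Y Z : Type*} [DecidableEq X] [DecidableEq Y] [DecidableEq Z]
    {N : ℕ} (O : Fin N → X → Y) [AddCommGroup Y] :
    Matrix ((Fin N × X) × Y × Z) ((Fin N × X) × Y × Z) ℂ :=
  Matrix.of fun b' b => if b' = (b.1, b.2.1 + O b.1.1 b.1.2, b.2.2) then 1 else 0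

/-- The synchronized-model oracle unitary `U_O` on `ℂ^{X × Y^N × W}`, permuting basis
vectors by `e_(x, (y₀,…,y_{N−1}), w) ↦ e_(x, (y₀ + O₀(x), …, y_{N−1} + O_{N−1}(x)), w)`. -/
def synOracleMatrix {X Y W : Type*} [DecidableEq X] [DecidableEq Y] [DecidableEq W]
    {N : ℕ} (O : Fin N → X → Y) [AddCommGroup Y] :
    Matrix (X × (Fin N → Y) × W) (X × (Fin N → Y) × W) ℂ :=
  Matrix.of fun b' b =>
    if b' = (b.1, (fun i => b.2.1 i + O i b.1), b.2.2) then 1 else 0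

/-- The linear isometry `ι : ℂ^{(Fin N × X) × Y × Z} → ℂ^{X × Y^N × (Fin N × Y × Z)}`
sending the basis vector `e_((i,x), y, z)` to the basis vector `e_(x, 0, (i, y, z))`. -/
def iota {X Y Z : Type*} [DecidableEq Y] [AddCommGroup Y] {N : ℕ} (v : (Fin N × X) × Y × Z → ℂ) :
    X × (Fin N → Y) × (Fin N × Y × Z) → ℂ :=
  fun b => if b.2.1 = 0 then v ((b.2.2.1, b.1), b.2.2.2.1, b.2.2.2.2) else 0

-- aux

def permMatrix {B : Type*} [DecidableEq B] (e : Equiv.Perm B) : Matrix B B ℂ :=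
  Matrix.of fun b' b => if b' = e b then 1 else 0

lemma permMatrix_mulVec {B : Type*} [Fintype B] [DecidableEq B] (e : Equiv.Perm B)
    (v : B → ℂ) : (permMatrix e).mulVec v = fun b => v (e.symm b) := by
  funext b
  simp [permMatrix, Matrix.mulVec, dotProduct, eq_comm (a := b),
    Equiv.apply_eq_iff_eq_symm_apply, ite_mul]

lemma permMatrix_mem {B : Type*} [Fintype B] [DecidableEq B] (e : Equiv.Perm B) :
    permMatrix e ∈ Matrix.unitaryGroup B ℂ := by
  rw [Matrix.mem_unitaryGroup_iff]
  ext i j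
  rw [Matrix.mul_apply, Matrix.one_apply]
  have h1 : ∀ k, permMatrix (B := B) e i k * star (permMatrix (B := B) e) k j
      = if k = e.symm i then (if k = e.symm j then 1 else 0) else 0 := by
    intro k
    by_cases h : k = e.symm i <;> by_cases h2 : k = e.symm j <;>
      simp_all [permMatrix, Matrix.star_apply, Equiv.eq_symm_apply, eq_comm]
  rw [Finset.sum_congr rfl (fun k _ => h1 k), Finset.sum_ite_eq' Finset.univ (e.symm i)]
  simp [Equiv.symm_apply_eq, eq_comm]

section Sim
open Matrix
variable {X Z : Type*} {Y : Type*}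
    [Fintype X] [Fintype Y] [Fintype Z]
    [DecidableEq X] [DecidableEq Y] [DecidableEq Z] [AddCommGroup Y]
    {N : ℕ}

/-- Standard oracle as a permutation. -/
def stdEquiv (O : Fin N → X → Y) : Equiv.Perm ((Fin N × X) × Y × Z) where
  toFun b := (b.1, b.2.1 + O b.1.1 b.1.2, b.2.2)
  invFun b := (b.1, b.2.1 - O b.1.1 b.1.2, b.2.2)
  left_inv b := by simp
  right_inv b := by simp

/-- Synchronized oracle as a permutation. -/
def synEquiv {W : Type*} (O : Fin N → X → Y) : Equiv.Perm (X × (Fin N → Y) × W) where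
  toFun b := (b.1, fun i => b.2.1 i + O i b.1, b.2.2)
  invFun b := (b.1, fun i => b.2.1 i - O i b.1, b.2.2)
  left_inv b := by simp
  right_inv b := by simp

lemma stdOracleMatrix_eq (O : Fin N → X → Y) :
    stdOracleMatrix (Z := Z) O = permMatrix (stdEquiv O) := rfl

lemma synOracleMatrix_eq {W : Type*} [DecidableEq W] (O : Fin N → X → Y) :
    synOracleMatrix (W := W) O = permMatrix (synEquiv O) := rfl

/-- The "shift" permutation `(x, v, (i, y, z)) ↦ (x, -v, (i, y + v i, z))`. -/
def shiftEquiv : Equiv.Perm (X × (Fin N → Y) × (Fin N × Y × Z)) where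
  toFun b := (b.1, -b.2.1, (b.2.2.1, b.2.2.2.1 + b.2.1 b.2.2.1, b.2.2.2.2))
  invFun b := (b.1, -b.2.1, (b.2.2.1, b.2.2.2.1 + b.2.1 b.2.2.1, b.2.2.2.2))
  left_inv b := by simp
  right_inv b := by simp

/-- Reindexing between the synchronized index set and `Std × (Fin N → Y)`. -/
def rho : (X × (Fin N → Y) × (Fin N × Y × Z)) ≃ (((Fin N × X) × Y × Z) × (Fin N → Y)) where
  toFun b := (((b.2.2.1, b.1), b.2.2.2.1, b.2.2.2.2), b.2.1)
  invFun c := (c.1.1.2, c.2, (c.1.1.1, c.1.2.1, c.1.2.2))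
  left_inv b := rfl
  right_inv c := rfl

/-- Embedding a standard-space unitary as a block unitary on the synchronized space:
it acts as `V` on the `v = 0` block and as the identity on every other block. -/
def embed (V : Matrix ((Fin N × X) × Y × Z) ((Fin N × X) × Y × Z) ℂ) :
    Matrix (X × (Fin N → Y) × (Fin N × Y × Z)) (X × (Fin N → Y) × (Fin N × Y × Z)) ℂ :=
  (Matrix.blockDiagonal (fun v : (Fin N → Y) => if v = 0 then V else 1)).submatrix rho rho

lemma embed_mem (V : Matrix ((Fin N × X) × Y × Z) ((Fin N × X) × Y × Z) ℂ)
    (hV : V ∈ Matrix.unitaryGroup ((Fin N × X) × Y × Z) ℂ) :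
    embed (Z := Z) V ∈ Matrix.unitaryGroup (X × (Fin N → Y) × (Fin N × Y × Z)) ℂ := by
  rw [Matrix.mem_unitaryGroup_iff] at hV ⊢
  show embed V * star (embed V) = 1
  rw [embed, Matrix.star_eq_conjTranspose, Matrix.conjTranspose_submatrix,
    Matrix.blockDiagonal_conjTranspose,
    Matrix.submatrix_mul_equiv _ _ _ (rho : _ ≃ _) _, ← Matrix.blockDiagonal_mul]
  have : (fun k : Fin N → Y => (if k = 0 then V else 1) *
      (if k = 0 then V else 1)ᴴ) =
      (1 : (Fin N → Y) → Matrix ((Fin N × X) × Y × Z) ((Fin N × X) × Y × Z) ℂ) := by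
    funext k
    by_cases hk : k = 0 <;> simp [hk, ← Matrix.star_eq_conjTranspose, hV]
  rw [this, Matrix.blockDiagonal_one, Matrix.submatrix_one_equiv]

lemma embed_mulVec_iota (V : Matrix ((Fin N × X) × Y × Z) ((Fin N × X) × Y × Z) ℂ)
    (χ : (Fin N × X) × Y × Z → ℂ) :
    (embed (Z := Z) V).mulVec (iota χ) = iota (V.mulVec χ) := by
  rw [embed, Matrix.submatrix_mulVec_equiv]
  funext b
  obtain ⟨x, v, i, y, z⟩ := b
  show (Matrix.blockDiagonal _).mulVec _ (((i, x), y, z), v) = _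
  rw [Matrix.mulVec]
  show ∑ c : (((Fin N × X) × Y × Z) × (Fin N → Y)), _ = _
  by_cases hv : v = 0
  · subst hv
    have key : ∀ c : (((Fin N × X) × Y × Z) × (Fin N → Y)),
        (Matrix.blockDiagonal (fun w : Fin N → Y => if w = 0 then V else 1))
            (((i, x), y, z), 0) c * (iota χ ∘ (rho (X := X) (Z := Z)).symm) c
          = if c.2 = 0 then V ((i, x), y, z) c.1 * χ c.1 else 0 := by
      intro c
      by_cases hc : c.2 = 0 <;>
        simp [Matrix.blockDiagonal_apply, hc, eq_comm, iota, rho]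
    rw [Finset.sum_congr rfl (fun c _ => key c)]
    rw [Fintype.sum_prod_type]
    simp [Finset.sum_ite_eq' Finset.univ (0 : Fin N → Y), iota, Matrix.mulVec,
      dotProduct]
  · have key : ∀ c : (((Fin N × X) × Y × Z) × (Fin N → Y)),
        (Matrix.blockDiagonal (fun w : Fin N → Y => if w = 0 then V else 1))
            (((i, x), y, z), v) c * (iota χ ∘ (rho (X := X) (Z := Z)).symm) c = 0 := by
      intro c
      by_cases hc : c.2 = v
      · simp [Matrix.blockDiagonal_apply, hc, iota, rho, hv]
      · simp [Matrix.blockDiagonal_apply, Ne.symm hc]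
    rw [Finset.sum_congr rfl (fun c _ => key c)]
    simp [iota, hv]


lemma twoStep {O : Fin N → X → Y} (Vt : Matrix ((Fin N × X) × Y × Z) ((Fin N × X) × Y × Z) ℂ)
    (ψ : (Fin N × X) × Y × Z → ℂ) :
    (embed (Z := Z) Vt).mulVec ((synOracleMatrix O).mulVec
        ((permMatrix shiftEquiv).mulVec ((synOracleMatrix O).mulVec (iota ψ)))) =
      iota (Vt.mulVec ((stdOracleMatrix O).mulVec ψ)) := by
  rw [synOracleMatrix_eq, _root_.permMatrix_mulVec, _root_.permMatrix_mulVec, _root_.permMatrix_mulVec]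
  have h : (fun b => (fun b => (fun b => iota (N := N) (Z := Z) ψ ((synEquiv O).symm b))
        ((shiftEquiv (X := X) (Y := Y) (Z := Z) (N := N)).symm b)) ((synEquiv O).symm b))
      = iota ((stdOracleMatrix O).mulVec ψ) := by
    funext b
    obtain ⟨x, v, i, y, z⟩ := b
    rw [stdOracleMatrix_eq, _root_.permMatrix_mulVec]
    show iota ψ _ = iota _ (x, v, i, y, z)
    simp only [synEquiv, shiftEquiv, Equiv.coe_fn_symm_mk, iota, Pi.neg_apply]
    have hcond : ((fun j => -(v j - O j x) - O j x) = (0 : Fin N → Y)) ↔ v = 0 := by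
      constructor
      · intro hf
        funext j
        have := congrFun hf j
        simpa using this
      · intro hf
        subst hf
        funext j
        simp
    by_cases hv : v = 0
    · subst hv
      simp only [hcond, if_pos rfl]
      simp [stdEquiv, sub_eq_add_neg]
    · simp only [hcond, if_neg hv]
  rw [h, embed_mulVec_iota]

end Sim


/-- **Simulation of the standard query model by the synchronized query model.**
Given a `T`-query algorithm in the standard query model to `N` oracles, with unitaries
`V_0, …, V_T` on `ℂ^{(Fin N × X) × Y × Z}` and initial basis vector `e₀`, there exist
unitaries `W_0, …, W_{2T}` on `ℂ^{X × Y^N × (Fin N × Y × Z)}`, independent of the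
oracles, such that for every tuple `O = (O₀, …, O_{N−1})` of oracles `O_i : X → Y`,
`W_{2T} U_O W_{2T−1} ⋯ W_1 U_O W_0 ι(e₀) = ι(V_T V_O ⋯ V_1 V_O V_0 e₀)`.
Consequently any `T`-query standard-model algorithm is simulated exactly, with
identical output distribution, by a `2T`-query synchronized-model algorithm. -/
theorem standard_to_synchronized_simulation {X Z : Type*} {Y : Type*}
    [Fintype X] [Fintype Y] [Fintype Z]
    [DecidableEq X] [DecidableEq Y] [DecidableEq Z] [AddCommGroup Y]
    (N T : ℕ) (hN : 0 < N) (hT : 0 < T)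
    (V : ℕ → Matrix ((Fin N × X) × Y × Z) ((Fin N × X) × Y × Z) ℂ)
    (hV : ∀ t, t ≤ T → V t ∈ Matrix.unitaryGroup ((Fin N × X) × Y × Z) ℂ)
    (b₀ : (Fin N × X) × Y × Z) :
    ∃ W : ℕ → Matrix (X × (Fin N → Y) × (Fin N × Y × Z))
        (X × (Fin N → Y) × (Fin N × Y × Z)) ℂ,
      (∀ t, t ≤ 2 * T → W t ∈ Matrix.unitaryGroup (X × (Fin N → Y) × (Fin N × Y × Z)) ℂ) ∧
      ∀ O : Fin N → X → Y,
        runAlg W (synOracleMatrix O) (2 * T) (iota (basisVec b₀)) =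
          iota (runAlg V (stdOracleMatrix O) T (basisVec b₀)) := by
  refine ⟨fun k => if k = 0 then embed (V 0) else
    if k % 2 = 1 then permMatrix shiftEquiv else embed (V (k / 2)), ?_, ?_⟩
  · intro t ht
    by_cases h0 : t = 0
    · simpa [h0] using embed_mem _ (hV 0 (by omega))
    · by_cases h1 : t % 2 = 1
      · simpa [h0, h1] using permMatrix_mem _
      · simpa [h0, h1] using embed_mem _ (hV (t / 2) (by omega))
  · intro O
    set W : ℕ → Matrix (X × (Fin N → Y) × (Fin N × Y × Z))
        (X × (Fin N → Y) × (Fin N × Y × Z)) ℂ := fun k => if k = 0 then embed (V 0) else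
      if k % 2 = 1 then permMatrix shiftEquiv else embed (V (k / 2)) with hW
    have key : ∀ t : ℕ, runAlg W (synOracleMatrix O) (2 * t) (iota (basisVec b₀)) =
        iota (runAlg V (stdOracleMatrix O) t (basisVec b₀)) := by
      intro t
      induction t with
      | zero =>
        show runAlg W (synOracleMatrix O) 0 _ = _
        simp only [runAlg, hW, if_pos rfl]
        rw [embed_mulVec_iota]
      | succ t ih =>
        have h2 : 2 * (t + 1) = 2 * t + 1 + 1 := by ring
        rw [h2]
        show (W (2 * t + 1 + 1)).mulVec ((synOracleMatrix O).mulVec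
          ((W (2 * t + 1)).mulVec ((synOracleMatrix O).mulVec
            (runAlg W (synOracleMatrix O) (2 * t) (iota (basisVec b₀)))))) = _
        have e1 : W (2 * t + 1 + 1) = embed (V (t + 1)) := by
          have : (2 * t + 1 + 1) / 2 = t + 1 := by omega
          simp [hW, this, Nat.add_mod]
        have e2 : W (2 * t + 1) = permMatrix shiftEquiv := by
          simp [hW, Nat.add_mod]
        rw [e1, e2, ih, twoStep]
        rfl
    exact key T

end
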